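/- Main reduction theorem (deterministic core): Let λ ≥ 1, ε > 0, T ∈ ℕ. Let U_T ≤ U_{T-1} ≤ ... ≤ U_0 be nonnegative reals (maximum matching sizes of nested edge sets S_T ⊆ ... ⊆ S_0) and suppose estimators M̂_i satisfy M̂_i ≤ U_i ≤ λ M̂_i and M̂_i = max(M̂_{i+1}, Ŝ_i) with M̂_{T+1}=0. Define Δ_i, B_i, A_i by the downward recursions Δ_i = max(0, M̂_i − 2B_{i+1}), B_i = B_{i+1}+Δ_i, A_i = A_{i+1}+(1+ε)^i Δ_i, with B_{T+1}=A_{T+1}=0. If additionally for every j the tail counts m_j := |M*∩(S_j\S_{j+1})| of a maximum weight matching M* satisfy Σ_{i=j}^T Δ_i ≤ Σ_{i=j}^T m_i ≤ 2λ Σ_{i=j}^T Δ_i, and Σ_{i} (1+ε)^i m_i ≤ w(M*) ≤ (1+ε) Σ_i (1+ε)^i m_i, then A_0 ≤ w(M*) ≤ 2λ(1+ε) A_0. -/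

import Mathlib

private lemma icc_split (j T : ℕ) (hjT : j ≤ T) (f : ℕ → ℝ) :
    ∑ i ∈ Finset.Icc j T, f i = f j + ∑ i ∈ Finset.Icc (j + 1) T, f i := by
  rw [Finset.Icc_add_one_left_eq_Ioc, ← Finset.Ioc_insert_left hjT, Finset.sum_insert (by simp)]

private lemma abel_key (T : ℕ) (c z : ℕ → ℝ) (hc0 : 0 ≤ c 0)
    (hcmono : ∀ i, c i ≤ c (i + 1))
    (hz : ∀ j ≤ T, 0 ≤ ∑ i ∈ Finset.Icc j T, z i) :
    0 ≤ ∑ i ∈ Finset.Icc 0 T, c i * z i := by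
  have key : ∀ n j, j + n = T + 1 →
      c j * (∑ i ∈ Finset.Icc j T, z i) ≤ ∑ i ∈ Finset.Icc j T, c i * z i := by
    intro n
    induction n with
    | zero =>
      intro j hj
      have : Finset.Icc j T = ∅ := Finset.Icc_eq_empty (by omega)
      simp [this]
    | succ n ih =>
      intro j hj
      have hjT : j ≤ T := by omega
      have h1 := ih (j + 1) (by omega)
      have h2 : 0 ≤ ∑ i ∈ Finset.Icc (j + 1) T, z i := by
        by_cases h : j + 1 ≤ T
        · exact hz _ h
        · have : Finset.Icc (j + 1) T = ∅ := Finset.Icc_eq_empty (by omega)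
          simp [this]
      have h3 : c j * (∑ i ∈ Finset.Icc (j + 1) T, z i) ≤
          c (j + 1) * (∑ i ∈ Finset.Icc (j + 1) T, z i) :=
        mul_le_mul_of_nonneg_right (hcmono j) h2
      rw [icc_split j T hjT z, icc_split j T hjT (fun i => c i * z i), mul_add]
      linarith
  have h0 := key (T + 1) 0 (by omega)
  have := mul_nonneg hc0 (hz 0 (by omega))
  linarith

theorem stmt_11 (T : ℕ) (lam ε : ℝ) (hlam : 1 ≤ lam) (hε : 0 < ε)
    (U Shat Mhat B Δ A m : ℕ → ℝ) (wM : ℝ)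
    (hUnonneg : ∀ i ≤ T, 0 ≤ U i)
    (hUmono : ∀ i, i + 1 ≤ T → U (i + 1) ≤ U i)
    (hSnonneg : ∀ i ≤ T, 0 ≤ Shat i)
    (hMtop : Mhat (T + 1) = 0)
    (hMrec : ∀ i ≤ T, Mhat i = max (Mhat (i + 1)) (Shat i))
    (hest : ∀ i ≤ T, Mhat i ≤ U i ∧ U i ≤ lam * Mhat i)
    (hBtop : B (T + 1) = 0) (hAtop : A (T + 1) = 0)
    (hΔ : ∀ i ≤ T, Δ i = max 0 (Mhat i - 2 * B (i + 1)))
    (hB : ∀ i ≤ T, B i = B (i + 1) + Δ i)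
    (hA : ∀ i ≤ T, A i = A (i + 1) + (1 + ε) ^ i * Δ i)
    (hmnonneg : ∀ i ≤ T, 0 ≤ m i)
    (htail : ∀ j ≤ T, ∑ i ∈ Finset.Icc j T, Δ i ≤ ∑ i ∈ Finset.Icc j T, m i ∧
        ∑ i ∈ Finset.Icc j T, m i ≤ 2 * lam * ∑ i ∈ Finset.Icc j T, Δ i)
    (hbucket : ∑ i ∈ Finset.range (T + 1), (1 + ε) ^ i * m i ≤ wM ∧
        wM ≤ (1 + ε) * ∑ i ∈ Finset.range (T + 1), (1 + ε) ^ i * m i) :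
    A 0 ≤ wM ∧ wM ≤ 2 * lam * (1 + ε) * A 0 := by
  set c : ℕ → ℝ := fun i => (1 + ε) ^ i with hc
  have hc0 : (0:ℝ) ≤ c 0 := by simp [hc]
  have hcmono : ∀ i, c i ≤ c (i + 1) := by
    intro i
    exact pow_le_pow_right₀ (by linarith) (Nat.le_succ i)
  -- A 0 is the weighted sum of Δ
  have hAexp : ∀ n j, j + n = T + 1 → A j = ∑ i ∈ Finset.Icc j T, c i * Δ i := by
    intro n
    induction n with
    | zero =>
      intro j hj
      have hj' : j = T + 1 := by omega
      have : Finset.Icc j T = ∅ := Finset.Icc_eq_empty (by omega)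
      simp [this, hj', hAtop]
    | succ n ih =>
      intro j hj
      have hjT : j ≤ T := by omega
      rw [icc_split j T hjT (fun i => c i * Δ i), hA j hjT, ih (j + 1) (by omega)]
      ring
  have hA0 : A 0 = ∑ i ∈ Finset.Icc 0 T, c i * Δ i := hAexp (T + 1) 0 (by omega)
  have hrange : Finset.range (T + 1) = Finset.Icc 0 T := by
    rw [← Nat.Ico_zero_eq_range, Finset.Ico_add_one_right_eq_Icc]
  -- first inequality: Σ c Δ ≤ Σ c m
  have h1 : ∑ i ∈ Finset.Icc 0 T, c i * Δ i ≤ ∑ i ∈ Finset.Icc 0 T, c i * m i := by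
    have := abel_key T c (fun i => m i - Δ i) hc0 hcmono (by
      intro j hj
      have := (htail j hj).1
      rw [Finset.sum_sub_distrib]
      linarith)
    have heq : ∑ i ∈ Finset.Icc 0 T, c i * (m i - Δ i)
        = ∑ i ∈ Finset.Icc 0 T, c i * m i - ∑ i ∈ Finset.Icc 0 T, c i * Δ i := by
      rw [← Finset.sum_sub_distrib]; apply Finset.sum_congr rfl; intro i _; ring
    linarith [heq ▸ this]
  -- second inequality: Σ c m ≤ 2λ Σ c Δ
  have h2 : ∑ i ∈ Finset.Icc 0 T, c i * m i ≤
      2 * lam * ∑ i ∈ Finset.Icc 0 T, c i * Δ i := by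
    have := abel_key T c (fun i => 2 * lam * Δ i - m i) hc0 hcmono (by
      intro j hj
      have := (htail j hj).2
      rw [Finset.sum_sub_distrib, ← Finset.mul_sum]
      linarith)
    have heq : ∑ i ∈ Finset.Icc 0 T, c i * (2 * lam * Δ i - m i)
        = 2 * lam * ∑ i ∈ Finset.Icc 0 T, c i * Δ i
          - ∑ i ∈ Finset.Icc 0 T, c i * m i := by
      rw [Finset.mul_sum, ← Finset.sum_sub_distrib]
      apply Finset.sum_congr rfl; intro i _; ring
    linarith [heq ▸ this]
  obtain ⟨hb1, hb2⟩ := hbucket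
  rw [hrange] at hb1 hb2
  constructor
  · linarith [hA0 ▸ h1]
  · rw [hA0]
    calc wM ≤ (1 + ε) * ∑ i ∈ Finset.Icc 0 T, c i * m i := hb2
      _ ≤ (1 + ε) * (2 * lam * ∑ i ∈ Finset.Icc 0 T, c i * Δ i) := by
          apply mul_le_mul_of_nonneg_left h2 (by linarith)
      _ = 2 * lam * (1 + ε) * ∑ i ∈ Finset.Icc 0 T, c i * Δ i := by ring
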